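/- If S is a closed surreal substructure, then the class S^{⧸ω} of fixed points of Ξ_S is itself a closed surreal substructure, and its parametrisation Ξ_S^ω satisfies: Ξ_S^ω(z) = sup_⊑ Ξ_S^ω(z_⊏) when z is a limit number, and Ξ_S^ω(u ∔ σ) = sup_⊑ { Ξ_S^n(Ξ_S^ω(u) ∔ σ) : n ∈ ℕ } for any number u and sign σ ∈ {−1,+1}. -/

import Mathlib

open Ordinal

attribute [local instance] Classical.propDecidable

/-- A surreal number presented as a sign sequence: a map from an ordinal (its
length) to `{-1, +1}`, extended by `0` beyond its length. -/
structure SSurreal : Type 1 where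
  length : Ordinal.{0}
  sign : Ordinal → ℤ
  sign_mem : ∀ α, α < length → sign α = 1 ∨ sign α = -1
  sign_zero : ∀ α, ¬ α < length → sign α = 0

namespace SSurreal

/-- Simplicity: `x ⊑ y`, i.e. `x` is an initial segment of `y`. -/
def sle (x y : SSurreal) : Prop := ∀ α, α < x.length → x.sign α = y.sign α

/-- Strict simplicity `x ⊏ y`. -/
def slt (x y : SSurreal) : Prop := sle x y ∧ x ≠ y

/-- The (lexicographic, Conway) order on sign sequences. -/
def lt (x y : SSurreal) : Prop :=
  ∃ α, (∀ β, β < α → x.sign β = y.sign β) ∧ x.sign α < y.sign α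

/-- The empty sign sequence, i.e. the surreal number `0`. -/
noncomputable def zero : SSurreal :=
  ⟨0, fun _ => 0, fun α h => absurd h (by simp), fun _ _ => rfl⟩

/-- The ordinal `o` viewed as the constant `+1` sign sequence of length `o`. -/
noncomputable def ofOrdinal (o : Ordinal) : SSurreal :=
  ⟨o, fun α => if α < o then 1 else 0, fun α h => Or.inl (if_pos h), fun α h => if_neg h⟩

/-- The surreal number `1`. -/
noncomputable def one : SSurreal := ofOrdinal 1

/-- The surreal number `-1`. -/
noncomputable def negOne : SSurreal :=
  ⟨1, fun α => if α < 1 then -1 else 0, fun α h => Or.inr (if_pos h), fun α h => if_neg h⟩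

/-- Negation: flip every sign. -/
noncomputable def neg (x : SSurreal) : SSurreal :=
  ⟨x.length, fun α => - x.sign α,
    fun α h => by rcases x.sign_mem α h with h' | h' <;> simp [h'],
    fun α h => by simp [x.sign_zero α h]⟩

/-- Concatenation `x ∔ y` of sign sequences. -/
noncomputable def concat (x y : SSurreal) : SSurreal where
  length := x.length + y.length
  sign α := if α < x.length then x.sign α else y.sign (α - x.length)
  sign_mem := by
    intro α h
    by_cases hx : α < x.length
    · rw [if_pos hx]; exact x.sign_mem α hx
    · rw [if_neg hx]
      refine y.sign_mem _ ?_
      have hle : x.length ≤ α := not_lt.mp hx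
      have := Ordinal.sub_lt_of_le hle (c := y.length)
      exact this.mpr h
  sign_zero := by
    intro α h
    have hx : ¬ α < x.length := fun hx =>
      h (hx.trans_le le_self_add)
    rw [if_neg hx]
    refine y.sign_zero _ ?_
    intro hy
    exact h ((Ordinal.sub_lt_of_le (not_lt.mp hx)).mp hy)

/-- The concatenation product `x ⨰ y` of sign sequences. -/
noncomputable def mul (x y : SSurreal) : SSurreal where
  length := x.length * y.length
  sign γ := if γ < x.length * y.length then y.sign (γ / x.length) * x.sign (γ % x.length) else 0
  sign_mem := by
    intro γ h
    rw [if_pos h]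
    have hx0 : x.length ≠ 0 := by
      intro h0; rw [h0, zero_mul] at h; exact absurd h (by simp)
    have h1 : γ / x.length < y.length := by
      rwa [Ordinal.div_lt hx0]
    have h2 : γ % x.length < x.length := Ordinal.mod_lt γ hx0
    rcases y.sign_mem _ h1 with hy | hy <;> rcases x.sign_mem _ h2 with hx | hx <;>
      simp [hy, hx]
  sign_zero := fun γ h => if_neg h

/-- `s` is the supremum of `C` with respect to simplicity. -/
def IsSimpSup (C : Set SSurreal) (s : SSurreal) : Prop :=
  (∀ x ∈ C, sle x s) ∧ ∀ t, (∀ x ∈ C, sle x t) → sle s t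

/-- The supremum of a ⊏-chain of sign sequences (their union), when it
exists; junk value `zero` otherwise. -/
noncomputable def chainSup (C : Set SSurreal) : SSurreal :=
  if h : ∃ s, IsSimpSup C s then h.choose else zero

/-- Transfinite concatenation `[α, f] = ∔_{γ<α} f(γ)`. -/
noncomputable def concatSum (α : Ordinal) (f : Ordinal → SSurreal) : SSurreal :=
  Ordinal.limitRecOn α zero (fun β ih => concat ih (f β))
    (fun γ _ ih => chainSup (Set.range fun p : Set.Iio γ => ih p.1 p.2))

/-- Restriction of `z` to an initial segment of length (at most) `β`. -/
noncomputable def trunc (z : SSurreal) (β : Ordinal) : SSurreal where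
  length := min β z.length
  sign α := if α < min β z.length then z.sign α else 0
  sign_mem := fun α h => by
    rw [if_pos h]; exact z.sign_mem α (h.trans_le (min_le_right _ _))
  sign_zero := fun α h => if_neg h

/-- The number of `+1` signs occurring in `s` strictly below `γ`. -/
noncomputable def countPlus (s : Ordinal → ℤ) (γ : Ordinal) : Ordinal :=
  Ordinal.limitRecOn γ 0 (fun β ih => if s β = 1 then ih + 1 else ih)
    (fun γ' _ ih => ⨆ β : Set.Iio γ', ih β.1 β.2)

/-- `τ_u`: the ordinal number of `+1` signs in the sign sequence of `u`. -/
noncomputable def tau (u : SSurreal) : Ordinal := countPlus u.sign u.length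

end SSurreal

namespace SSurreal

/-- `Ξ` is the parametrisation of the surreal substructure `S`: a
`(<, ⊏)`-isomorphism from `No` onto `S`. -/
def IsSubstructurePar (S : Set SSurreal) (Ξ : SSurreal → SSurreal) : Prop :=
  (∀ z, Ξ z ∈ S) ∧ (∀ y ∈ S, ∃ z, Ξ z = y) ∧
  (∀ z w, lt z w ↔ lt (Ξ z) (Ξ w)) ∧ (∀ z w, slt z w ↔ slt (Ξ z) (Ξ w))

/-- The parametrisation `Ξ` is closed: it commutes with simplicity-suprema of
nonempty ⊏-chains. -/
def IsClosedPar (Ξ : SSurreal → SSurreal) : Prop :=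
  ∀ C : Set SSurreal, C.Nonempty → IsChain slt C →
    ∀ s, IsSimpSup C s → IsSimpSup (Ξ '' C) (Ξ s)

end SSurreal

namespace SSurreal

/-! ### Basic lemmas -/

theorem sign_ne_zero_iff (x : SSurreal) {α : Ordinal} : x.sign α ≠ 0 ↔ α < x.length := by
  constructor
  · intro h; by_contra h'; exact h (x.sign_zero α h')
  · intro h; rcases x.sign_mem α h with h' | h' <;> simp [h']

theorem sign_self_len (x : SSurreal) : x.sign x.length = 0 :=
  x.sign_zero _ (lt_irrefl _)

theorem ext' {x y : SSurreal} (h : ∀ α, x.sign α = y.sign α) : x = y := by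
  have hl : x.length = y.length := by
    by_contra hne
    rcases lt_or_gt_of_ne hne with hlt | hlt
    · exact (y.sign_ne_zero_iff.mpr hlt) (by rw [← h]; exact x.sign_self_len)
    · exact (x.sign_ne_zero_iff.mpr hlt) (by rw [h]; exact y.sign_self_len)
  cases x; cases y
  simp only [SSurreal.mk.injEq]
  exact ⟨hl, funext h⟩

theorem sle_refl (x : SSurreal) : sle x x := fun _ _ => rfl

theorem sle.length_le {x y : SSurreal} (h : sle x y) : x.length ≤ y.length := by
  by_contra h'
  push_neg at h'
  exact (x.sign_ne_zero_iff.mpr h') (by rw [h _ h']; exact y.sign_self_len)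

theorem sle_trans {x y z : SSurreal} (h1 : sle x y) (h2 : sle y z) : sle x z := fun α hα => by
  rw [h1 α hα, h2 α (hα.trans_le h1.length_le)]

theorem eq_of_sle_of_length_le {x y : SSurreal} (h : sle x y) (hl : y.length ≤ x.length) :
    x = y := by
  refine ext' fun α => ?_
  by_cases hα : α < x.length
  · exact h α hα
  · rw [x.sign_zero α hα, y.sign_zero α (fun hy => hα (hy.trans_le hl))]

theorem sle_antisymm {x y : SSurreal} (h1 : sle x y) (h2 : sle y x) : x = y :=
  eq_of_sle_of_length_le h1 h2.length_le

theorem slt.length_lt {x y : SSurreal} (h : slt x y) : x.length < y.length :=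
  lt_of_le_of_ne h.1.length_le fun hl => h.2 (eq_of_sle_of_length_le h.1 hl.ge)

theorem slt_of_sle_of_length_lt {x y : SSurreal} (h : sle x y) (hl : x.length < y.length) :
    slt x y := ⟨h, fun he => absurd (he ▸ hl) (lt_irrefl _)⟩

theorem sle_trans_slt {x y z : SSurreal} (h1 : sle x y) (h2 : slt y z) : slt x z :=
  slt_of_sle_of_length_lt (sle_trans h1 h2.1) (lt_of_le_of_lt h1.length_le h2.length_lt)

theorem slt_trans_sle {x y z : SSurreal} (h1 : slt x y) (h2 : sle y z) : slt x z :=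
  slt_of_sle_of_length_lt (sle_trans h1.1 h2) (lt_of_lt_of_le h1.length_lt h2.length_le)

theorem sle_comparable {x y z : SSurreal} (h1 : sle x z) (h2 : sle y z) :
    sle x y ∨ sle y x := by
  rcases le_total x.length y.length with hl | hl
  · exact Or.inl fun α hα => by rw [h1 α hα, ← h2 α (hα.trans_le hl)]
  · exact Or.inr fun α hα => by rw [h2 α hα, ← h1 α (hα.trans_le hl)]

/-! ### Truncation -/

theorem trunc_length (z : SSurreal) (β : Ordinal) : (trunc z β).length = min β z.length := rfl

theorem trunc_sle (z : SSurreal) (β : Ordinal) : sle (trunc z β) z := fun α h => if_pos h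

theorem trunc_eq_of_sle {w z : SSurreal} (h : sle w z) : trunc z w.length = w := by
  refine ext' fun α => ?_
  by_cases hα : α < w.length
  · rw [show (trunc z w.length).sign α = z.sign α from
      if_pos (lt_min hα (hα.trans_le h.length_le)), h α hα]
  · rw [(trunc z w.length).sign_zero α (by
      rw [trunc_length, min_eq_left h.length_le]; exact hα), w.sign_zero α hα]

theorem trunc_slt {z : SSurreal} {β : Ordinal} (h : β < z.length) : slt (trunc z β) z :=
  slt_of_sle_of_length_lt (trunc_sle z β) (by rw [trunc_length, min_eq_left h.le]; exact h)

theorem slt_iff_trunc {w z : SSurreal} : slt w z ↔ ∃ β < z.length, w = trunc z β := by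
  constructor
  · intro h
    exact ⟨w.length, h.length_lt, (trunc_eq_of_sle h.1).symm⟩
  · rintro ⟨β, hβ, rfl⟩
    exact trunc_slt hβ

/-! ### First difference, lexicographic order -/

theorem exists_first_diff {x y : SSurreal} (h : x ≠ y) :
    ∃ δ, (∀ β, β < δ → x.sign β = y.sign β) ∧ x.sign δ ≠ y.sign δ := by
  by_cases hne : ∃ α, x.sign α ≠ y.sign α
  · obtain ⟨δ, hδ1, hδ2⟩ := Ordinal.lt_wf.has_min {α | x.sign α ≠ y.sign α} hne
    exact ⟨δ, fun β hβ => not_not.mp fun hb => hδ2 β hb hβ, hδ1⟩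
  · push_neg at hne
    exact absurd (ext' hne) h

theorem lt_irrefl' (x : SSurreal) : ¬ lt x x := fun ⟨_, _, h⟩ => lt_irrefl _ h

theorem lt_asymm' {x y : SSurreal} (h1 : lt x y) (h2 : lt y x) : False := by
  obtain ⟨α, ha1, ha2⟩ := h1
  obtain ⟨γ, hg1, hg2⟩ := h2
  rcases lt_trichotomy α γ with h | h | h
  · rw [hg1 α h] at ha2; exact lt_irrefl _ ha2
  · subst h; exact lt_asymm ha2 hg2
  · rw [ha1 γ h] at hg2; exact lt_irrefl _ hg2

theorem lt_or_lt_of_ne {x y : SSurreal} (h : x ≠ y) : lt x y ∨ lt y x := by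
  obtain ⟨δ, h1, h2⟩ := exists_first_diff h
  rcases lt_or_gt_of_ne h2 with h' | h'
  · exact Or.inl ⟨δ, h1, h'⟩
  · exact Or.inr ⟨δ, fun β hβ => (h1 β hβ).symm, h'⟩

theorem lt_of_slt_of_sign_one {u w : SSurreal} (h : slt u w) (hs : w.sign u.length = 1) :
    lt u w :=
  ⟨u.length, fun β hβ => h.1 β hβ, by rw [u.sign_self_len, hs]; exact zero_lt_one⟩

theorem lt_of_slt_of_sign_neg {u w : SSurreal} (h : slt u w) (hs : w.sign u.length = -1) :
    lt w u :=
  ⟨u.length, fun β hβ => (h.1 β hβ).symm, by rw [u.sign_self_len, hs]; norm_num⟩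

theorem sign_one_of_slt_of_lt {u w : SSurreal} (h : slt u w) (hlt : lt u w) :
    w.sign u.length = 1 := by
  rcases w.sign_mem u.length h.length_lt with h' | h'
  · exact h'
  · exact absurd hlt fun hl => lt_asymm' hl (lt_of_slt_of_sign_neg h h')

theorem sign_neg_of_slt_of_lt {u w : SSurreal} (h : slt u w) (hlt : lt w u) :
    w.sign u.length = -1 := by
  rcases w.sign_mem u.length h.length_lt with h' | h'
  · exact absurd hlt fun hl => lt_asymm' (lt_of_slt_of_sign_one h h') hl
  · exact h'

theorem branch_of_not_sle {z w : SSurreal} (h1 : ¬ sle z w) (h2 : ¬ sle w z) :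
    ∃ δ, trunc z δ = trunc w δ ∧ z.sign δ ≠ w.sign δ ∧ δ < z.length ∧ δ < w.length := by
  have hne : z ≠ w := fun he => h1 (he ▸ sle_refl z)
  obtain ⟨δ, hd1, hd2⟩ := exists_first_diff hne
  have hz : δ < z.length := by
    by_contra hz
    exact h1 fun α hα => hd1 α (hα.trans_le (le_of_not_gt hz))
  have hw : δ < w.length := by
    by_contra hw
    exact h2 fun α hα => (hd1 α (hα.trans_le (le_of_not_gt hw))).symm
  refine ⟨δ, ext' fun α => ?_, hd2, hz, hw⟩
  by_cases hα : α < δ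
  · show (if _ then _ else _) = (if _ then _ else _)
    rw [if_pos (lt_min hα (hα.trans hz)), if_pos (lt_min hα (hα.trans hw)), hd1 α hα]
  · rw [(trunc z δ).sign_zero α (by rw [trunc_length]; exact fun hc => hα (lt_min_iff.mp hc).1),
      (trunc w δ).sign_zero α (by rw [trunc_length]; exact fun hc => hα (lt_min_iff.mp hc).1)]

/-! ### Concatenation with a single sign -/

/-- The single-sign sequence determined by `ε ∈ {1, -1}`. -/
noncomputable def sgl (ε : ℤ) : SSurreal := if ε = 1 then one else negOne

theorem sgl_length (ε : ℤ) : (sgl ε).length = 1 := by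
  unfold sgl; split <;> rfl

theorem sgl_sign_zero' {ε : ℤ} (hε : ε = 1 ∨ ε = -1) : (sgl ε).sign 0 = ε := by
  rcases hε with h | h <;> subst h <;> simp [sgl, one, negOne, ofOrdinal, zero_lt_one]

theorem sgl_one : sgl 1 = one := if_pos rfl

theorem sgl_negOne : sgl (-1) = negOne := if_neg (by norm_num)

theorem concat_length' (x y : SSurreal) : (concat x y).length = x.length + y.length := rfl

theorem concat_sign_lt {x α : _} {y : SSurreal} (h : α < x.length) :
    (concat x y).sign α = x.sign α := if_pos h

theorem concat_sign_ge {x α : _} {y : SSurreal} (h : ¬ α < x.length) :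
    (concat x y).sign α = y.sign (α - x.length) := if_neg h

theorem sle_concat (x y : SSurreal) : sle x (concat x y) := fun _ h => (if_pos h).symm

theorem concat_length_pos {y : SSurreal} (hy : y.length ≠ 0) (x : SSurreal) :
    x.length < (concat x y).length := by
  rw [concat_length']
  simpa using (add_lt_add_iff_left x.length).mpr (pos_iff_ne_zero.mpr hy)

theorem slt_concat {y : SSurreal} (hy : y.length ≠ 0) (x : SSurreal) : slt x (concat x y) :=
  slt_of_sle_of_length_lt (sle_concat x y) (concat_length_pos hy x)

theorem slt_concat_sgl (x : SSurreal) (ε : ℤ) : slt x (concat x (sgl ε)) :=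
  slt_concat (by rw [sgl_length]; exact one_ne_zero) x

theorem concat_sgl_length (u : SSurreal) (ε : ℤ) :
    (concat u (sgl ε)).length = u.length + 1 := by
  rw [concat_length', sgl_length]

theorem concat_sign_self {x : SSurreal} (y : SSurreal) :
    (concat x y).sign x.length = y.sign 0 := by
  rw [concat_sign_ge (lt_irrefl _), Ordinal.sub_self]

theorem concat_sgl_sign_self {u : SSurreal} {ε : ℤ} (hε : ε = 1 ∨ ε = -1) :
    (concat u (sgl ε)).sign u.length = ε := by
  rw [concat_sign_self, sgl_sign_zero' hε]

/-- If `w` strictly extends `u` and has sign `ε` right after `u`, then `u ∔ ε ⊑ w`. -/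
theorem concat_sgl_sle {u w : SSurreal} {ε : ℤ} (hε : ε = 1 ∨ ε = -1)
    (hu : slt u w) (hs : w.sign u.length = ε) : sle (concat u (sgl ε)) w := by
  intro α hα
  rw [concat_sgl_length, Ordinal.add_one_eq_succ, Order.lt_succ_iff] at hα
  rcases lt_or_eq_of_le hα with hα | hα
  · rw [concat_sign_lt hα, hu.1 α hα]
  · subst hα
    rw [concat_sign_self, sgl_sign_zero' hε, hs]

theorem trunc_succ {z : SSurreal} {β : Ordinal} (hβ : β < z.length) :
    trunc z (β + 1) = concat (trunc z β) (sgl (z.sign β)) := by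
  have hsg := z.sign_mem β hβ
  have hβ1 : β + 1 ≤ z.length := by
    rw [Ordinal.add_one_eq_succ, Order.succ_le_iff]; exact hβ
  have hlen : (trunc z β).length = β := by rw [trunc_length, min_eq_left hβ.le]
  have hsc := concat_sign_self (x := trunc z β) (sgl (z.sign β))
  rw [hlen] at hsc
  refine ext' fun α => ?_
  rcases lt_trichotomy α β with hα | hα | hα
  · rw [show (trunc z (β + 1)).sign α = z.sign α from
      if_pos (lt_min (hα.trans (lt_add_one β)) (hα.trans hβ)),
      concat_sign_lt (show α < (trunc z β).length by rw [hlen]; exact hα),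
      show (trunc z β).sign α = z.sign α from if_pos (lt_min hα (hα.trans hβ))]
  · rw [hα, show (trunc z (β + 1)).sign β = z.sign β from
      if_pos (lt_min (lt_add_one β) hβ), hsc, sgl_sign_zero' hsg]
  · have h1 : ¬ α < β + 1 := by
      rw [Ordinal.add_one_eq_succ, Order.lt_succ_iff]; exact fun h => absurd hα (not_lt_of_ge h)
    rw [(trunc z (β + 1)).sign_zero α
        (by rw [trunc_length]; exact fun hc => h1 (lt_min_iff.mp hc).1),
      (concat (trunc z β) (sgl (z.sign β))).sign_zero α
        (by rw [concat_sgl_length, hlen]; exact h1)]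

/-! ### Suprema of chains -/

theorem isSimpSup_unique {C : Set SSurreal} {s t : SSurreal}
    (hs : IsSimpSup C s) (ht : IsSimpSup C t) : s = t :=
  sle_antisymm (hs.2 t ht.1) (ht.2 s hs.1)

theorem chainSup_eq {C : Set SSurreal} {s : SSurreal} (hs : IsSimpSup C s) :
    chainSup C = s := by
  rw [chainSup, dif_pos ⟨s, hs⟩]
  exact isSimpSup_unique (⟨s, hs⟩ : ∃ s, IsSimpSup C s).choose_spec hs

/-- A nonempty `⊑`-chain with bounded lengths has a simplicity supremum. -/
theorem exists_isSimpSup {C : Set SSurreal} (hne : C.Nonempty)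
    (hch : ∀ x ∈ C, ∀ y ∈ C, sle x y ∨ sle y x)
    (hbd : BddAbove (length '' C)) :
    ∃ s, IsSimpSup C s ∧ s.length = sSup (length '' C) := by
  classical
  have hne' : (length '' C).Nonempty := hne.image _
  have hex : ∀ {α}, α < sSup (length '' C) → ∃ x, x ∈ C ∧ α < x.length := by
    intro α hα
    obtain ⟨l, ⟨x, hx, rfl⟩, hl⟩ := (lt_csSup_iff hbd hne').mp hα
    exact ⟨x, hx, hl⟩
  refine ⟨⟨sSup (length '' C),
    fun α => if h : ∃ x, x ∈ C ∧ α < x.length then h.choose.sign α else 0, ?_, ?_⟩, ⟨?_, ?_⟩, rfl⟩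
  · intro α hα
    have h := hex hα
    simp only [dif_pos h]
    exact h.choose.sign_mem α h.choose_spec.2
  · intro α hα
    have hno : ¬ ∃ x, x ∈ C ∧ α < x.length := by
      rintro ⟨x, hx, hl⟩
      exact hα (hl.trans_le (le_csSup hbd ⟨x, hx, rfl⟩))
    simp only [dif_neg hno]
  · intro x hx α hα
    have h : ∃ y, y ∈ C ∧ α < y.length := ⟨x, hx, hα⟩
    show x.sign α = if h : _ then _ else _
    rw [dif_pos h]
    rcases hch x hx h.choose h.choose_spec.1 with hc | hc
    · exact hc α hα
    · exact (hc α h.choose_spec.2).symm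
  · intro t ht α hα
    have h := hex hα
    simp only [dif_pos h]
    exact ht h.choose h.choose_spec.1 α h.choose_spec.2

theorem IsSimpSup.length_eq {C : Set SSurreal} {s : SSurreal} (hne : C.Nonempty)
    (hch : ∀ x ∈ C, ∀ y ∈ C, sle x y ∨ sle y x) (hs : IsSimpSup C s) :
    s.length = sSup (length '' C) := by
  have hbd : BddAbove (length '' C) := by
    refine ⟨s.length, ?_⟩
    rintro l ⟨x, hx, rfl⟩
    exact (hs.1 x hx).length_le
  obtain ⟨t, ht, htl⟩ := exists_isSimpSup hne hch hbd
  rw [isSimpSup_unique hs ht, htl]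

/-! ### Properties of a closed parametrisation -/

/-- `sup_⊑ {Ξ^n x : n ∈ ℕ}` (junk unless this is a genuine chain). -/
noncomputable def supN (Ξ : SSurreal → SSurreal) (x : SSurreal) : SSurreal :=
  chainSup (Set.range fun n : ℕ => Ξ^[n] x)

section Par

variable {Ξ : SSurreal → SSurreal}

theorem xi_sle_mono (hslt : ∀ z w, slt z w ↔ slt (Ξ z) (Ξ w)) {x y : SSurreal}
    (h : sle x y) : sle (Ξ x) (Ξ y) := by
  by_cases he : x = y
  · subst he; exact sle_refl _
  · exact ((hslt x y).mp ⟨h, he⟩).1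

theorem xi_iter_step (hslt : ∀ z w, slt z w ↔ slt (Ξ z) (Ξ w)) {x : SSurreal}
    (hx : sle x (Ξ x)) (n : ℕ) : sle (Ξ^[n] x) (Ξ^[n + 1] x) := by
  induction n with
  | zero => exact hx
  | succ n ih =>
    rw [Function.iterate_succ_apply' Ξ n x, Function.iterate_succ_apply' Ξ (n + 1) x]
    exact xi_sle_mono hslt ih

theorem xi_iter_mono (hslt : ∀ z w, slt z w ↔ slt (Ξ z) (Ξ w)) {x : SSurreal}
    (hx : sle x (Ξ x)) {m n : ℕ} (h : m ≤ n) : sle (Ξ^[m] x) (Ξ^[n] x) := by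
  induction n, h using Nat.le_induction with
  | base => exact sle_refl _
  | succ n _ ih => exact sle_trans ih (xi_iter_step hslt hx n)

theorem xi_iter_sle_mono (hslt : ∀ z w, slt z w ↔ slt (Ξ z) (Ξ w)) {x y : SSurreal}
    (h : sle x y) (n : ℕ) : sle (Ξ^[n] x) (Ξ^[n] y) := by
  induction n with
  | zero => exact h
  | succ n ih =>
    rw [Function.iterate_succ_apply' Ξ n x, Function.iterate_succ_apply' Ξ n y]
    exact xi_sle_mono hslt ih

theorem xi_iter_fixed {y : SSurreal} (hy : Ξ y = y) (n : ℕ) : Ξ^[n] y = y := by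
  induction n with
  | zero => rfl
  | succ n ih => rw [Function.iterate_succ_apply' Ξ n y, ih, hy]

theorem iterates_chain_sle (hslt : ∀ z w, slt z w ↔ slt (Ξ z) (Ξ w)) {x : SSurreal}
    (hx : sle x (Ξ x)) :
    ∀ a ∈ (Set.range fun n : ℕ => Ξ^[n] x), ∀ b ∈ (Set.range fun n : ℕ => Ξ^[n] x),
      sle a b ∨ sle b a := by
  rintro a ⟨m, rfl⟩ b ⟨n, rfl⟩
  rcases le_total m n with h | h
  · exact Or.inl (xi_iter_mono hslt hx h)
  · exact Or.inr (xi_iter_mono hslt hx h)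

theorem supN_isSimpSup (hslt : ∀ z w, slt z w ↔ slt (Ξ z) (Ξ w)) {x : SSurreal}
    (hx : sle x (Ξ x)) :
    IsSimpSup (Set.range fun n : ℕ => Ξ^[n] x) (supN Ξ x) := by
  obtain ⟨s, hs, -⟩ := exists_isSimpSup (C := Set.range fun n : ℕ => Ξ^[n] x)
    ⟨x, ⟨0, rfl⟩⟩ (iterates_chain_sle hslt hx)
    (by
      rw [← Set.range_comp]
      exact Ordinal.bddAbove_range _)
  rw [supN, chainSup_eq hs]
  exact hs

theorem sle_comparable_of_chain {C : Set SSurreal} (hch : IsChain slt C) :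
    ∀ x ∈ C, ∀ y ∈ C, sle x y ∨ sle y x := by
  intro x hx y hy
  by_cases he : x = y
  · exact Or.inl (he ▸ sle_refl x)
  · rcases hch hx hy he with h | h
    · exact Or.inl h.1
    · exact Or.inr h.1

/-- A genuine sup of a chain of `Ξ`-fixed points is `Ξ`-fixed. -/
theorem fixed_of_sup_of_fixed (hcl : IsClosedPar Ξ) {C : Set SSurreal} (hne : C.Nonempty)
    (hch : IsChain slt C) (hfix : ∀ x ∈ C, Ξ x = x) {s : SSurreal}
    (hs : IsSimpSup C s) : Ξ s = s := by
  have himg : Ξ '' C = C := by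
    rw [show Ξ '' C = id '' C from Set.image_congr fun x hx => hfix x hx, Set.image_id]
  have := hcl C hne hch s hs
  rw [himg] at this
  exact isSimpSup_unique this hs

theorem supN_fixed (hslt : ∀ z w, slt z w ↔ slt (Ξ z) (Ξ w)) (hcl : IsClosedPar Ξ)
    {x : SSurreal} (hx : sle x (Ξ x)) : Ξ (supN Ξ x) = supN Ξ x := by
  set C : Set SSurreal := Set.range fun n : ℕ => Ξ^[n] x with hC
  have hch : IsChain slt C := by
    rintro a ⟨m, rfl⟩ b ⟨n, rfl⟩ hab
    rcases le_total m n with h | h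
    · exact Or.inl ⟨xi_iter_mono hslt hx h, hab⟩
    · exact Or.inr ⟨xi_iter_mono hslt hx h, fun he => hab he.symm⟩
  have hs := supN_isSimpSup hslt hx
  have h2 := hcl C ⟨x, 0, rfl⟩ hch _ hs
  -- `Ξ (supN Ξ x)` is also a sup of `C`
  refine isSimpSup_unique ⟨?_, ?_⟩ hs
  · rintro a ⟨n, rfl⟩
    refine sle_trans (xi_iter_step hslt hx n) ?_
    rw [Function.iterate_succ_apply' Ξ n x]
    exact h2.1 _ ⟨Ξ^[n] x, ⟨n, rfl⟩, rfl⟩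
  · intro t ht
    refine h2.2 t ?_
    rintro a ⟨b, ⟨n, rfl⟩, rfl⟩
    rw [← Function.iterate_succ_apply' Ξ n x]
    exact ht _ ⟨n + 1, rfl⟩

theorem supN_sle_self (hslt : ∀ z w, slt z w ↔ slt (Ξ z) (Ξ w)) {x : SSurreal}
    (hx : sle x (Ξ x)) : sle x (supN Ξ x) :=
  (supN_isSimpSup hslt hx).1 x ⟨0, rfl⟩

theorem supN_min_fixed (hslt : ∀ z w, slt z w ↔ slt (Ξ z) (Ξ w)) {x y : SSurreal}
    (hx : sle x (Ξ x)) (hy : Ξ y = y) (hxy : sle x y) : sle (supN Ξ x) y := by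
  refine (supN_isSimpSup hslt hx).2 y ?_
  rintro a ⟨n, rfl⟩
  rw [← xi_iter_fixed hy n]
  exact xi_iter_sle_mono hslt hxy n

/-- Key step: for `u` a fixed point, `u ∔ σ ⊑ Ξ(u ∔ σ)`. -/
theorem fixed_concat_sle (hslt : ∀ z w, slt z w ↔ slt (Ξ z) (Ξ w))
    (hlt : ∀ z w, lt z w ↔ lt (Ξ z) (Ξ w)) {u : SSurreal} (hu : Ξ u = u) {ε : ℤ}
    (hε : ε = 1 ∨ ε = -1) :
    sle (concat u (sgl ε)) (Ξ (concat u (sgl ε))) := by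
  set x := concat u (sgl ε) with hxdef
  have hux : slt u x := slt_concat_sgl u ε
  have huX : slt u (Ξ x) := hu ▸ (hslt u x).mp hux
  have hsx : x.sign u.length = ε := concat_sgl_sign_self hε
  rcases hε with h1 | h1
  · subst h1
    have hl : lt u x := lt_of_slt_of_sign_one hux hsx
    have hl2 : lt u (Ξ x) := hu ▸ (hlt u x).mp hl
    exact concat_sgl_sle (Or.inl rfl) huX (sign_one_of_slt_of_lt huX hl2)
  · subst h1
    have hl : lt x u := lt_of_slt_of_sign_neg hux hsx
    have hl2 : lt (Ξ x) u := hu ▸ (hlt x u).mp hl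
    exact concat_sgl_sle (Or.inr rfl) huX (sign_neg_of_slt_of_lt huX hl2)

/-! ### The candidate parametrisation of the fixed points -/

/-- Stage-`o` approximation of `Ξ^ω` applied to (the length-`o` truncation of) `z`. -/
noncomputable def xiAux (Ξ : SSurreal → SSurreal) (o : Ordinal) : SSurreal → SSurreal :=
  Ordinal.limitRecOn o (fun _ => supN Ξ zero)
    (fun β ih z => if z.sign β = 0 then ih z else supN Ξ (concat (ih z) (sgl (z.sign β))))
    (fun o _ ih z => chainSup (Set.range fun β : Set.Iio o => ih β.1 β.2 z))

/-- The candidate parametrisation `Ξ^ω`. -/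
noncomputable def xiw (Ξ : SSurreal → SSurreal) (z : SSurreal) : SSurreal :=
  xiAux Ξ z.length z

theorem xiAux_zero (Ξ : SSurreal → SSurreal) (z : SSurreal) :
    xiAux Ξ 0 z = supN Ξ zero := by
  rw [xiAux, Ordinal.limitRecOn_zero]

theorem xiAux_succ (Ξ : SSurreal → SSurreal) (β : Ordinal) (z : SSurreal) :
    xiAux Ξ (Order.succ β) z =
      if z.sign β = 0 then xiAux Ξ β z
      else supN Ξ (concat (xiAux Ξ β z) (sgl (z.sign β))) := by
  rw [xiAux, Ordinal.limitRecOn_succ]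
  rfl

theorem xiAux_limit (Ξ : SSurreal → SSurreal) {o : Ordinal} (ho : Order.IsSuccLimit o) (z : SSurreal) :
    xiAux Ξ o z = chainSup (Set.range fun β : Set.Iio o => xiAux Ξ β.1 z) := by
  rw [xiAux, Ordinal.limitRecOn_limit _ _ _ _ ho]
  rfl

theorem bddAbove_length_range {ι : Type*} [Small.{0} ι] (f : ι → SSurreal) :
    BddAbove (length '' Set.range f) := by
  rw [← Set.range_comp]
  exact Ordinal.bddAbove_of_small

section Par

variable {Ξ : SSurreal → SSurreal}

theorem xiAux_master (hslt : ∀ z w, slt z w ↔ slt (Ξ z) (Ξ w))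
    (hlt : ∀ z w, lt z w ↔ lt (Ξ z) (Ξ w)) (hcl : IsClosedPar Ξ) :
    ∀ o : Ordinal, ∀ z : SSurreal,
      Ξ (xiAux Ξ o z) = xiAux Ξ o z ∧
      (∀ β < o, sle (xiAux Ξ β z) (xiAux Ξ o z)) ∧
      (∀ w, (∀ β < o, z.sign β = w.sign β) → xiAux Ξ o z = xiAux Ξ o w) ∧
      min o z.length ≤ (xiAux Ξ o z).length := by
  intro o
  induction o using Ordinal.induction with
  | h o IH =>
  intro z
  rcases Ordinal.zero_or_succ_or_isSuccLimit o with rfl | ⟨β, rfl⟩ | ho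
  · -- zero stage
    have hx : sle zero (Ξ zero) := fun α h => absurd h (not_lt_of_ge (zero_le : (0 : Ordinal) ≤ α))
    refine ⟨?_, ?_, ?_, ?_⟩
    · rw [xiAux_zero]; exact supN_fixed hslt hcl hx
    · intro β hβ; exact absurd hβ (not_lt_of_ge (zero_le : (0 : Ordinal) ≤ β))
    · intro w _; rw [xiAux_zero, xiAux_zero]
    · simp
  · -- successor stage
    have hβlt : β < Order.succ β := Order.lt_succ β
    obtain ⟨hfix, hmono, hcoh, hlen⟩ := IH β hβlt z
    by_cases hz0 : z.sign β = 0
    · have hcomp : xiAux Ξ (Order.succ β) z = xiAux Ξ β z := by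
        rw [xiAux_succ, if_pos hz0]
      have hβz : ¬ β < z.length := fun h => (z.sign_ne_zero_iff.mpr h) hz0
      refine ⟨hcomp ▸ hfix, ?_, ?_, ?_⟩
      · intro β' hβ'
        rw [hcomp]
        rcases lt_or_eq_of_le (Order.lt_succ_iff.mp hβ') with h | h
        · exact hmono β' h
        · rw [h]; exact sle_refl _
      · intro w hw
        have h2 : w.sign β = 0 := by rw [← hw β hβlt]; exact hz0
        rw [hcomp, xiAux_succ, if_pos h2]
        exact hcoh w fun γ hγ => hw γ (hγ.trans hβlt)
      · rw [hcomp]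
        refine le_trans (le_of_eq ?_) hlen
        have hzl : z.length ≤ β := le_of_not_gt hβz
        rw [min_eq_right (hzl.trans (Order.le_succ β)), min_eq_right hzl]
    · have hβz : β < z.length := z.sign_ne_zero_iff.mp hz0
      have hsg := z.sign_mem β hβz
      set u := xiAux Ξ β z with hu
      have hx : sle (concat u (sgl (z.sign β))) (Ξ (concat u (sgl (z.sign β)))) :=
        fixed_concat_sle hslt hlt hfix hsg
      have hcomp : xiAux Ξ (Order.succ β) z = supN Ξ (concat u (sgl (z.sign β))) := by
        rw [xiAux_succ, if_neg hz0]
      have hsle1 : sle u (xiAux Ξ (Order.succ β) z) := by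
        rw [hcomp]
        exact sle_trans (slt_concat_sgl u (z.sign β)).1 (supN_sle_self hslt hx)
      refine ⟨?_, ?_, ?_, ?_⟩
      · rw [hcomp]; exact supN_fixed hslt hcl hx
      · intro β' hβ'
        rcases lt_or_eq_of_le (Order.lt_succ_iff.mp hβ') with h | h
        · exact sle_trans (hmono β' h) hsle1
        · rw [h]; exact hsle1
      · intro w hw
        have h1 : xiAux Ξ β z = xiAux Ξ β w :=
          hcoh w fun γ hγ => hw γ (hγ.trans hβlt)
        have h2 : z.sign β = w.sign β := hw β hβlt
        rw [hcomp, xiAux_succ, ← h2, if_neg hz0, ← h1]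
      · have h1 : sle (concat u (sgl (z.sign β))) (xiAux Ξ (Order.succ β) z) := by
          rw [hcomp]; exact supN_sle_self hslt hx
        refine le_trans ?_ h1.length_le
        rw [concat_sgl_length]
        have : β ≤ u.length := by
          rw [hu]
          exact le_trans (le_of_eq (min_eq_left hβz.le).symm) hlen
        calc min (Order.succ β) z.length ≤ Order.succ β := min_le_left _ _
          _ = β + 1 := (Ordinal.add_one_eq_succ β).symm
          _ ≤ u.length + 1 := add_le_add_left this 1
  · -- limit stage
    have hne : (Set.range fun β : Set.Iio o => xiAux Ξ β.1 z).Nonempty :=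
      ⟨_, ⟨⟨0, ho.pos⟩, rfl⟩⟩
    have hchsle : ∀ a ∈ (Set.range fun β : Set.Iio o => xiAux Ξ β.1 z),
        ∀ b ∈ (Set.range fun β : Set.Iio o => xiAux Ξ β.1 z), sle a b ∨ sle b a := by
      rintro a ⟨⟨β₁, hβ₁⟩, rfl⟩ b ⟨⟨β₂, hβ₂⟩, rfl⟩
      rcases lt_trichotomy β₁ β₂ with h | h | h
      · exact Or.inl ((IH β₂ hβ₂ z).2.1 β₁ h)
      · subst h; exact Or.inl (sle_refl _)
      · exact Or.inr ((IH β₁ hβ₁ z).2.1 β₂ h)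
    have hch : IsChain slt (Set.range fun β : Set.Iio o => xiAux Ξ β.1 z) := by
      intro a ha b hb hab
      rcases hchsle a ha b hb with h | h
      · exact Or.inl ⟨h, hab⟩
      · exact Or.inr ⟨h, fun he => hab he.symm⟩
    obtain ⟨s, hs, hslen⟩ := exists_isSimpSup hne hchsle (bddAbove_length_range _)
    have hbd : BddAbove (length '' (Set.range fun β : Set.Iio o => xiAux Ξ β.1 z)) :=
      bddAbove_length_range _
    have hcomp : xiAux Ξ o z = s := by rw [xiAux_limit Ξ ho, chainSup_eq hs]
    refine ⟨?_, ?_, ?_, ?_⟩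
    · rw [hcomp]
      refine fixed_of_sup_of_fixed hcl hne hch ?_ hs
      rintro a ⟨⟨β, hβ⟩, rfl⟩
      exact (IH β hβ z).1
    · intro β hβ
      rw [hcomp]
      exact hs.1 _ ⟨⟨β, hβ⟩, rfl⟩
    · intro w hw
      rw [xiAux_limit Ξ ho, xiAux_limit Ξ ho,
        show (fun β : Set.Iio o => xiAux Ξ β.1 z) = fun β : Set.Iio o => xiAux Ξ β.1 w from
          funext fun β => (IH β.1 β.2 z).2.2.1 w fun γ hγ => hw γ (hγ.trans β.2)]
    · rw [hcomp, hslen]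
      have key : ∀ β < o, min β z.length ≤ sSup (length ''
          (Set.range fun β : Set.Iio o => xiAux Ξ β.1 z)) := by
        intro β hβ
        exact le_trans (IH β hβ z).2.2.2 (le_csSup hbd ⟨_, ⟨⟨β, hβ⟩, rfl⟩, rfl⟩)
      rcases le_or_gt o z.length with h | h
      · rw [min_eq_left h]
        rw [ho.le_iff_forall_le]
        intro β hβ
        exact le_trans (le_of_eq (min_eq_left (hβ.le.trans h)).symm) (key β hβ)
      · rw [min_eq_right h.le]
        exact le_trans (le_of_eq (min_eq_right (le_refl _)).symm) (key z.length h)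

theorem trunc_sign_agree {z : SSurreal} {β : Ordinal} :
    ∀ α, α < β → z.sign α = (trunc z β).sign α := by
  intro α hα
  by_cases h : α < z.length
  · exact (if_pos (lt_min hα h)).symm
  · rw [z.sign_zero α h, (trunc z β).sign_zero α
      (by rw [trunc_length]; exact fun hc => h (lt_min_iff.mp hc).2)]

theorem trunc_mono (z : SSurreal) {β γ : Ordinal} (h : β ≤ γ) :
    sle (trunc z β) (trunc z γ) := by
  intro α hα
  rw [trunc_length] at hα
  rw [show (trunc z β).sign α = z.sign α from if_pos hα,
    show (trunc z γ).sign α = z.sign α from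
      if_pos (lt_min ((lt_min_iff.mp hα).1.trans_le h) (lt_min_iff.mp hα).2)]

variable {Ξ : SSurreal → SSurreal}
variable (hslt : ∀ z w, slt z w ↔ slt (Ξ z) (Ξ w))
variable (hlt : ∀ z w, lt z w ↔ lt (Ξ z) (Ξ w))
variable (hcl : IsClosedPar Ξ)

include hslt hlt hcl

theorem xiw_fixed (z : SSurreal) : Ξ (xiw Ξ z) = xiw Ξ z :=
  (xiAux_master hslt hlt hcl z.length z).1

theorem xiw_trunc {z : SSurreal} {β : Ordinal} (hβ : β ≤ z.length) :
    xiw Ξ (trunc z β) = xiAux Ξ β z := by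
  have hl : (trunc z β).length = β := by rw [trunc_length, min_eq_left hβ]
  rw [xiw, hl]
  exact (xiAux_master hslt hlt hcl β (trunc z β)).2.2.1 z fun γ hγ =>
    (trunc_sign_agree γ hγ).symm

theorem xiw_eq_xiAux {w z : SSurreal} (h : sle w z) : xiw Ξ w = xiAux Ξ w.length z := by
  have h2 := xiw_trunc hslt hlt hcl (z := z) (β := w.length) h.length_le
  rw [trunc_eq_of_sle h] at h2
  exact h2

theorem xiAux_sle_xiw {z : SSurreal} {β : Ordinal} (hβ : β ≤ z.length) :
    sle (xiAux Ξ β z) (xiw Ξ z) := by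
  rcases lt_or_eq_of_le hβ with h | h
  · exact (xiAux_master hslt hlt hcl z.length z).2.1 β h
  · rw [h]; exact sle_refl _

theorem xiw_sle_mono {w z : SSurreal} (h : sle w z) : sle (xiw Ξ w) (xiw Ξ z) := by
  rw [xiw_eq_xiAux hslt hlt hcl h]
  exact xiAux_sle_xiw hslt hlt hcl h.length_le

theorem xiAux_succ_concat_sle {z : SSurreal} {β : Ordinal} (hβ : β < z.length) :
    sle (concat (xiAux Ξ β z) (sgl (z.sign β))) (xiAux Ξ (Order.succ β) z) := by
  have hz0 : z.sign β ≠ 0 := z.sign_ne_zero_iff.mpr hβ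
  rw [xiAux_succ, if_neg hz0]
  exact supN_sle_self hslt
    (fixed_concat_sle hslt hlt (xiAux_master hslt hlt hcl β z).1 (z.sign_mem β hβ))

theorem xiw_slt_mono {w z : SSurreal} (h : slt w z) : slt (xiw Ξ w) (xiw Ξ z) := by
  have hβ : w.length < z.length := h.length_lt
  rw [xiw_eq_xiAux hslt hlt hcl h.1]
  refine slt_trans_sle (slt_trans_sle (slt_concat_sgl _ (z.sign w.length))
    (xiAux_succ_concat_sle hslt hlt hcl hβ)) ?_
  rw [← Ordinal.add_one_eq_succ]
  refine xiAux_sle_xiw hslt hlt hcl ?_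
  rw [Ordinal.add_one_eq_succ, Order.succ_le_iff]
  exact hβ

theorem xiw_branch_sle {u z : SSurreal} (h : slt u z) :
    sle (concat (xiw Ξ u) (sgl (z.sign u.length))) (xiw Ξ z) := by
  rw [xiw_eq_xiAux hslt hlt hcl h.1]
  refine sle_trans (xiAux_succ_concat_sle hslt hlt hcl h.length_lt) ?_
  rw [← Ordinal.add_one_eq_succ]
  refine xiAux_sle_xiw hslt hlt hcl ?_
  rw [Ordinal.add_one_eq_succ, Order.succ_le_iff]
  exact h.length_lt

theorem xiw_branch_sign {u z : SSurreal} (h : slt u z) :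
    (xiw Ξ z).sign ((xiw Ξ u).length) = z.sign u.length := by
  have h7 := xiw_branch_sle hslt hlt hcl h
  have h8 := h7 ((xiw Ξ u).length)
    (by rw [concat_sgl_length]; exact lt_add_one _)
  rw [concat_sign_self, sgl_sign_zero' (z.sign_mem _ h.length_lt)] at h8
  exact h8.symm

/-- The successor formula. -/
theorem xiw_concat_sgl {ε : ℤ} (hε : ε = 1 ∨ ε = -1) (u : SSurreal) :
    IsSimpSup (Set.range fun n : ℕ => Ξ^[n] (concat (xiw Ξ u) (sgl ε)))
      (xiw Ξ (concat u (sgl ε))) := by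
  set z := concat u (sgl ε) with hz
  have hsz : z.sign u.length = ε := concat_sgl_sign_self hε
  have hε0 : ε ≠ 0 := by rcases hε with h | h <;> simp [h]
  have hlen : z.length = Order.succ u.length := by
    rw [hz, concat_sgl_length, Ordinal.add_one_eq_succ]
  have hcoh : xiAux Ξ u.length z = xiw Ξ u :=
    ((xiAux_master hslt hlt hcl u.length z).2.2.1 u fun γ hγ =>
      concat_sign_lt hγ).symm ▸ rfl
  have hcomp : xiw Ξ z = supN Ξ (concat (xiw Ξ u) (sgl ε)) := by
    rw [xiw, hlen, xiAux_succ, hsz, if_neg hε0, hcoh]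
  rw [hcomp]
  exact supN_isSimpSup hslt
    (fixed_concat_sle hslt hlt (xiw_fixed hslt hlt hcl u) hε)

theorem xiAux_limit_isSimpSup {o : Ordinal} (ho : Order.IsSuccLimit o) (z : SSurreal) :
    IsSimpSup (Set.range fun β : Set.Iio o => xiAux Ξ β.1 z) (xiAux Ξ o z) := by
  have hne : (Set.range fun β : Set.Iio o => xiAux Ξ β.1 z).Nonempty :=
    ⟨_, ⟨⟨0, ho.pos⟩, rfl⟩⟩
  have hchsle : ∀ a ∈ (Set.range fun β : Set.Iio o => xiAux Ξ β.1 z),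
      ∀ b ∈ (Set.range fun β : Set.Iio o => xiAux Ξ β.1 z), sle a b ∨ sle b a := by
    rintro a ⟨⟨β₁, hβ₁⟩, rfl⟩ b ⟨⟨β₂, hβ₂⟩, rfl⟩
    rcases lt_trichotomy β₁ β₂ with h | h | h
    · exact Or.inl ((xiAux_master hslt hlt hcl β₂ z).2.1 β₁ h)
    · subst h; exact Or.inl (sle_refl _)
    · exact Or.inr ((xiAux_master hslt hlt hcl β₁ z).2.1 β₂ h)
  obtain ⟨s, hs, -⟩ := exists_isSimpSup hne hchsle (bddAbove_length_range _)
  rw [xiAux_limit Ξ ho, chainSup_eq hs]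
  exact hs

/-- The limit formula. -/
theorem xiw_limit {z : SSurreal} (hz : Order.IsSuccLimit z.length) :
    IsSimpSup (xiw Ξ '' {w | slt w z}) (xiw Ξ z) := by
  have h1 := xiAux_limit_isSimpSup hslt hlt hcl hz z
  have hset : xiw Ξ '' {w | slt w z} =
      Set.range fun β : Set.Iio z.length => xiAux Ξ β.1 z := by
    ext x
    constructor
    · rintro ⟨w, hw, rfl⟩
      exact ⟨⟨w.length, hw.length_lt⟩, (xiw_eq_xiAux hslt hlt hcl hw.1).symm⟩
    · rintro ⟨⟨β, hβ⟩, rfl⟩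
      exact ⟨trunc z β, trunc_slt hβ, xiw_trunc hslt hlt hcl hβ.le⟩
  rw [hset]
  exact h1

theorem xiw_lt_A {u z : SSurreal} (h : slt u z) (hs : z.sign u.length = 1) :
    lt (xiw Ξ u) (xiw Ξ z) :=
  lt_of_slt_of_sign_one (xiw_slt_mono hslt hlt hcl h)
    (by rw [xiw_branch_sign hslt hlt hcl h, hs])

theorem xiw_lt_B {u z : SSurreal} (h : slt u z) (hs : z.sign u.length = -1) :
    lt (xiw Ξ z) (xiw Ξ u) :=
  lt_of_slt_of_sign_neg (xiw_slt_mono hslt hlt hcl h)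
    (by rw [xiw_branch_sign hslt hlt hcl h, hs])

theorem xiw_lt_mono {z w : SSurreal} (h : lt z w) : lt (xiw Ξ z) (xiw Ξ w) := by
  have hne : z ≠ w := fun he => lt_irrefl' z (he ▸ h)
  obtain ⟨δ, hd1, hd2⟩ := exists_first_diff hne
  have hdlt : z.sign δ < w.sign δ := by
    rcases lt_or_gt_of_ne hd2 with h' | h'
    · exact h'
    · exact absurd h fun hh => lt_asymm' hh ⟨δ, fun β hβ => (hd1 β hβ).symm, h'⟩
  by_cases hzl : δ < z.length
  · by_cases hwl : δ < w.length
    · -- branching case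
      have h1 : ¬ sle z w := fun hs => hd2 (hs δ hzl)
      have h2 : ¬ sle w z := fun hs => hd2 (hs δ hwl).symm
      obtain ⟨δ', hu, hd2', hz', hw'⟩ := branch_of_not_sle h1 h2
      have hagree : ∀ α, α < δ' → z.sign α = w.sign α := fun α hα => by
        rw [trunc_sign_agree α hα, hu, ← trunc_sign_agree α hα]
      have hmain : z.sign δ' = -1 ∧ w.sign δ' = 1 := by
        rcases z.sign_mem δ' hz' with h3 | h3 <;> rcases w.sign_mem δ' hw' with h4 | h4
        · exact absurd (h3.trans h4.symm) hd2'
        · refine absurd h fun hh => lt_asymm' hh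
            ⟨δ', fun β hβ => (hagree β hβ).symm, by rw [h3, h4]; norm_num⟩
        · exact ⟨h3, h4⟩
        · exact absurd (h3.trans h4.symm) hd2'
      have hul : (trunc z δ').length = δ' := by rw [trunc_length, min_eq_left hz'.le]
      have huz : slt (trunc z δ') z := trunc_slt hz'
      have huw : slt (trunc z δ') w := hu ▸ trunc_slt hw'
      have hsgz : (xiw Ξ z).sign ((xiw Ξ (trunc z δ')).length) = -1 := by
        rw [xiw_branch_sign hslt hlt hcl huz, hul, hmain.1]
      have hsgw : (xiw Ξ w).sign ((xiw Ξ (trunc z δ')).length) = 1 := by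
        rw [xiw_branch_sign hslt hlt hcl huw, hul, hmain.2]
      refine ⟨(xiw Ξ (trunc z δ')).length, fun β hβ => ?_, by rw [hsgz, hsgw]; norm_num⟩
      rw [← (xiw_slt_mono hslt hlt hcl huz).1 β hβ,
        (xiw_slt_mono hslt hlt hcl huw).1 β hβ]
    · -- `w` ends at `δ`, `z` continues with a `-1`
      have hw0 : w.sign δ = 0 := w.sign_zero δ hwl
      have hz1 : z.sign δ = -1 := by
        rcases z.sign_mem δ hzl with h3 | h3
        · rw [h3, hw0] at hdlt; norm_num at hdlt
        · exact h3
      have hδw : δ = w.length := by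
        refine le_antisymm ?_ (le_of_not_gt hwl)
        by_contra hc
        push_neg at hc
        have h5 : z.sign w.length = 0 := by rw [hd1 _ hc]; exact w.sign_self_len
        have h6 : z.length ≤ w.length := le_of_not_gt fun hh => (z.sign_ne_zero_iff.mpr hh) h5
        exact lt_irrefl δ (hzl.trans_le (h6.trans hc.le))
      have hwz : slt w z := ⟨fun α hα => (hd1 α (hδw ▸ hα)).symm, fun he => hne he.symm⟩
      exact xiw_lt_B hslt hlt hcl hwz (by rw [← hδw]; exact hz1)
  · -- `z` ends at `δ`, `w` continues with a `+1`
    have hz0 : z.sign δ = 0 := z.sign_zero δ hzl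
    have hne0 : w.sign δ ≠ 0 := by
      rw [hz0] at hdlt
      exact ne_of_gt hdlt
    have hwlen : δ < w.length := w.sign_ne_zero_iff.mp hne0
    have hw1 : w.sign δ = 1 := by
      rcases w.sign_mem δ hwlen with h3 | h3
      · exact h3
      · rw [hz0, h3] at hdlt; norm_num at hdlt
    have hδz : δ = z.length := by
      refine le_antisymm ?_ (le_of_not_gt hzl)
      by_contra hc
      push_neg at hc
      have h5 : w.sign z.length = 0 := by rw [← hd1 _ hc]; exact z.sign_self_len
      have h6 : w.length ≤ z.length := le_of_not_gt fun hh => (w.sign_ne_zero_iff.mpr hh) h5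
      exact lt_irrefl δ (hwlen.trans_le (h6.trans hc.le))
    have hzw : slt z w := ⟨fun α hα => hd1 α (hδz ▸ hα), hne⟩
    exact xiw_lt_A hslt hlt hcl hzw (by rw [← hδz]; exact hw1)

theorem xiw_inj {z w : SSurreal} (h : xiw Ξ z = xiw Ξ w) : z = w := by
  by_contra hne
  rcases lt_or_lt_of_ne hne with h' | h'
  · exact lt_irrefl' _ (h ▸ xiw_lt_mono hslt hlt hcl h')
  · exact lt_irrefl' _ (h ▸ xiw_lt_mono hslt hlt hcl h')

theorem xiw_lt_iff (z w : SSurreal) : lt z w ↔ lt (xiw Ξ z) (xiw Ξ w) := by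
  refine ⟨xiw_lt_mono hslt hlt hcl, fun h => ?_⟩
  rcases eq_or_ne z w with rfl | hne
  · exact absurd h (lt_irrefl' _)
  · rcases lt_or_lt_of_ne hne with h' | h'
    · exact h'
    · exact absurd h fun hh => lt_asymm' hh (xiw_lt_mono hslt hlt hcl h')

theorem xiw_slt_iff (z w : SSurreal) : slt z w ↔ slt (xiw Ξ z) (xiw Ξ w) := by
  refine ⟨xiw_slt_mono hslt hlt hcl, fun h => ?_⟩
  have hne : z ≠ w := fun he => h.2 (he ▸ rfl)
  by_cases h1 : sle z w
  · exact ⟨h1, hne⟩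
  by_cases h2 : sle w z
  · exact absurd (xiw_inj hslt hlt hcl
      (sle_antisymm h.1 (xiw_slt_mono hslt hlt hcl ⟨h2, fun he => hne he.symm⟩).1)) hne
  obtain ⟨δ, hu, hd2, hz', hw'⟩ := branch_of_not_sle h1 h2
  have hul : (trunc z δ).length = δ := by rw [trunc_length, min_eq_left hz'.le]
  have huz : slt (trunc z δ) z := trunc_slt hz'
  have huw : slt (trunc z δ) w := hu ▸ trunc_slt hw'
  have hLlt : (xiw Ξ (trunc z δ)).length < (xiw Ξ z).length :=
    (xiw_slt_mono hslt hlt hcl huz).length_lt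
  have e1 := xiw_branch_sign hslt hlt hcl huz
  have e2 := xiw_branch_sign hslt hlt hcl huw
  rw [hul] at e1 e2
  exact absurd (by rw [← e1, h.1 _ hLlt, e2]) hd2

theorem xiw_closed : IsClosedPar (xiw Ξ) := by
  intro C hne hch s hs
  by_cases hsC : s ∈ C
  · constructor
    · rintro x ⟨c, hc, rfl⟩
      exact xiw_sle_mono hslt hlt hcl (hs.1 c hc)
    · intro t ht
      exact ht _ ⟨s, hsC, rfl⟩
  · have hall : ∀ c ∈ C, slt c s := fun c hc => ⟨hs.1 c hc, fun he => hsC (he ▸ hc)⟩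
    have hchsle := sle_comparable_of_chain hch
    have hlen := IsSimpSup.length_eq hne hchsle hs
    have hbd : BddAbove (length '' C) :=
      ⟨s.length, by rintro l ⟨x, hx, rfl⟩; exact (hs.1 x hx).length_le⟩
    have hlim : Order.IsSuccLimit s.length := by
      refine Ordinal.isSuccLimit_iff.mpr ⟨?_, Order.isSuccPrelimit_of_succ_lt ?_⟩
      · obtain ⟨c, hc⟩ := hne
        exact fun h0 => absurd ((hall c hc).length_lt.trans_le h0.le)
          (not_lt_of_ge zero_le)
      · intro β hβ
        rw [hlen] at hβ
        obtain ⟨l, ⟨c, hc, rfl⟩, hl⟩ := (lt_csSup_iff hbd (hne.image _)).mp hβ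
        exact lt_of_le_of_lt (Order.succ_le_iff.mpr hl) (hall c hc).length_lt
    have hls := xiw_limit hslt hlt hcl hlim
    constructor
    · rintro x ⟨c, hc, rfl⟩
      exact xiw_sle_mono hslt hlt hcl (hs.1 c hc)
    · intro t ht
      refine hls.2 t ?_
      rintro x ⟨w, hw, rfl⟩
      have hwlen : w.length < s.length := hw.length_lt
      rw [hlen] at hwlen
      obtain ⟨l, ⟨c, hc, rfl⟩, hl⟩ := (lt_csSup_iff hbd (hne.image _)).mp hwlen
      have hwc : sle w c := fun α hα => by
        rw [hw.1 α hα, ← (hs.1 c hc) α (hα.trans hl)]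
      exact sle_trans (xiw_sle_mono hslt hlt hcl hwc) (ht _ ⟨c, hc, rfl⟩)

theorem xiw_surj {y : SSurreal} (hy : Ξ y = y) : ∃ z, xiw Ξ z = y := by
  classical
  set D : Set SSurreal := {z | sle (xiw Ξ z) y} with hD
  have hx0 : sle zero (Ξ zero) := fun α h => absurd h (not_lt_of_ge (zero_le : (0 : Ordinal) ≤ α))
  have h0 : zero ∈ D := by
    show sle (xiw Ξ zero) y
    rw [show xiw Ξ zero = supN Ξ zero from xiAux_zero Ξ zero]
    exact supN_min_fixed hslt hx0 hy fun α h => absurd h (not_lt_of_ge (zero_le : (0 : Ordinal) ≤ α))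
  have hrefl : ∀ {a b : SSurreal}, sle (xiw Ξ a) (xiw Ξ b) → sle a b := by
    intro a b h
    by_cases he : xiw Ξ a = xiw Ξ b
    · rw [xiw_inj hslt hlt hcl he]; exact sle_refl _
    · exact ((xiw_slt_iff hslt hlt hcl a b).mpr ⟨h, he⟩).1
  have hDsle : ∀ a ∈ D, ∀ b ∈ D, sle a b ∨ sle b a := by
    intro a ha b hb
    rcases sle_comparable ha hb with h | h
    · exact Or.inl (hrefl h)
    · exact Or.inr (hrefl h)
  have hlenle : ∀ z : SSurreal, z.length ≤ (xiw Ξ z).length := fun z => by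
    have h := (xiAux_master hslt hlt hcl z.length z).2.2.2
    rwa [min_self] at h
  have hbd : BddAbove (length '' D) :=
    ⟨y.length, by rintro l ⟨z, hz, rfl⟩; exact le_trans (hlenle z) (sle.length_le hz)⟩
  obtain ⟨s, hs, -⟩ := exists_isSimpSup (C := D) ⟨zero, h0⟩ hDsle hbd
  have hch : IsChain slt D := fun a ha b hb hab => by
    rcases hDsle a ha b hb with h | h
    · exact Or.inl ⟨h, hab⟩
    · exact Or.inr ⟨h, fun he => hab he.symm⟩
  have hclosed := xiw_closed hslt hlt hcl D ⟨zero, h0⟩ hch s hs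
  have h1 : sle (xiw Ξ s) y := hclosed.2 y (by rintro x ⟨z, hz, rfl⟩; exact hz)
  refine ⟨s, ?_⟩
  by_contra he
  have hslt' : slt (xiw Ξ s) y := ⟨h1, he⟩
  have hτ := y.sign_mem _ hslt'.length_lt
  have hform := xiw_concat_sgl hslt hlt hcl hτ s
  have hall : ∀ n : ℕ,
      sle (Ξ^[n] (concat (xiw Ξ s) (sgl (y.sign (xiw Ξ s).length)))) y := by
    intro n
    induction n with
    | zero => exact concat_sgl_sle hτ hslt' rfl
    | succ n ih =>
      rw [Function.iterate_succ_apply']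
      have h6 := xi_sle_mono hslt ih
      rwa [hy] at h6
  have hz'D : concat s (sgl (y.sign (xiw Ξ s).length)) ∈ D := by
    show sle _ y
    exact hform.2 y (by rintro x ⟨n, rfl⟩; exact hall n)
  have h5 := hs.1 _ hz'D
  exact absurd (slt_concat_sgl s (y.sign (xiw Ξ s).length)).length_lt
    (not_lt_of_ge h5.length_le)

end Par

end Par

end SSurreal

open SSurreal in
/-- if `S` is a closed surreal substructure, the class `S^{⧸ω}`
of fixed points of `Ξ_S` is a closed surreal substructure, and its
parametrisation `Ξ_S^ω` is computed by suprema: at limit numbers it preserves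
simplicity-suprema, and at successors
`Ξ_S^ω(u ∔ σ) = sup_⊑ { Ξ_S^n(Ξ_S^ω(u) ∔ σ) : n ∈ ℕ }`. -/
theorem fixed_points_closed_substructure_and_parametrisation (S : Set SSurreal)
    (Ξ : SSurreal → SSurreal) (hS : IsSubstructurePar S Ξ)
    (hcl : IsClosedPar Ξ) :
    ∃ Ξω : SSurreal → SSurreal,
      IsSubstructurePar {z : SSurreal | Ξ z = z} Ξω ∧
      IsClosedPar Ξω ∧
      (∀ z : SSurreal, Order.IsSuccLimit z.length →
        IsSimpSup (Ξω '' {w | slt w z}) (Ξω z)) ∧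
      (∀ u σ : SSurreal, σ = SSurreal.one ∨ σ = negOne →
        IsSimpSup (Set.range fun n : ℕ => Ξ^[n] (concat (Ξω u) σ))
          (Ξω (concat u σ))) := by
  obtain ⟨hmem, hsurj, hltiso, hsltiso⟩ := hS
  refine ⟨xiw Ξ, ⟨?_, ?_, ?_, ?_⟩, ?_, ?_, ?_⟩
  · exact fun z => xiw_fixed hsltiso hltiso hcl z
  · exact fun y hy => xiw_surj hsltiso hltiso hcl hy
  · exact xiw_lt_iff hsltiso hltiso hcl
  · exact xiw_slt_iff hsltiso hltiso hcl
  · exact xiw_closed hsltiso hltiso hcl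
  · exact fun z hz => xiw_limit hsltiso hltiso hcl hz
  · intro u σ hσ
    rcases hσ with rfl | rfl
    · have h := xiw_concat_sgl hsltiso hltiso hcl (Or.inl rfl) u
      rwa [sgl_one] at h
    · have h := xiw_concat_sgl hsltiso hltiso hcl (Or.inr rfl) u
      rwa [sgl_negOne] at h
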